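/- Let d ≥ 2 be an even integer and let P : ℝ[X] satisfy: natDegree P = 2d, P.coeff k = 0 for every odd k, P.coeff 0 ≠ 0, Multiset.card P.roots = 2d, and exactly d roots of P (with multiplicity) lie in (0, ∞). Let ε ∈ ℝ and set Q = P - ε • X^d; assume also Multiset.card Q.roots = 2d and exactly d roots of Q (with multiplicity) lie in (0, ∞). Then the product of the roots of P in (0, ∞) equals the product of the roots of Q in (0, ∞). (This is the even-degree case of the key lemma for Arnold's theorem on ℍ¹ and 𝕊¹: in arc-length coordinates t = log x on the hyperbola branch, ∑ (t_i - t_i^ε) = 0.) -/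

import Mathlib

open Polynomial

private lemma even_poly_comp_neg {p : ℝ[X]} (hodd : ∀ k, Odd k → p.coeff k = 0) :
    p.comp (-X) = p := by
  apply Polynomial.funext
  intro x
  rw [eval_comp, eval_neg, eval_X, eval_eq_sum_range, eval_eq_sum_range]
  refine Finset.sum_congr rfl fun i _ => ?_
  rcases Nat.even_or_odd i with hi | hi
  · rw [hi.neg_pow]
  · rw [hodd i hi]; simp

private lemma rm_le_rm_neg {p : ℝ[X]} (hp : p ≠ 0) (h : p.comp (-X) = p) (a : ℝ) :
    p.rootMultiplicity a ≤ p.rootMultiplicity (-a) := by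
  rw [Polynomial.le_rootMultiplicity_iff hp]
  set n := p.rootMultiplicity a with hn
  obtain ⟨q, hq⟩ := Polynomial.pow_rootMultiplicity_dvd p a
  refine ⟨(-1) ^ n * q.comp (-X), ?_⟩
  conv_lhs => rw [← h, hq]
  rw [mul_comp, pow_comp, sub_comp, X_comp, C_comp]
  have hx : (-X : ℝ[X]) - C a = (-1) * (X - C (-a)) := by rw [map_neg]; ring
  rw [hx, mul_pow]
  ring

private lemma roots_map_neg {p : ℝ[X]} (hp : p ≠ 0) (h : p.comp (-X) = p) :
    p.roots.map (fun x => -x) = p.roots := by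
  have hrm : ∀ a : ℝ, p.rootMultiplicity (-a) = p.rootMultiplicity a := fun a =>
    le_antisymm (by simpa using rm_le_rm_neg hp h (-a)) (rm_le_rm_neg hp h a)
  ext a
  have : a = -(-a) := by ring
  rw [this, Multiset.count_map_eq_count' _ _ neg_injective, count_roots, count_roots,
    ← this, hrm]

private lemma key_sq {p : ℝ[X]} {n : ℕ} (hne : Even n)
    (hodd : ∀ k, Odd k → p.coeff k = 0) (h0 : p.coeff 0 ≠ 0)
    (hcard : Multiset.card p.roots = p.natDegree)
    (hpos : Multiset.card (p.roots.filter fun x => 0 < x) = n) :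
    p.coeff 0 = p.leadingCoeff * ((p.roots.filter fun x => 0 < x).prod) ^ 2 := by
  have hp : p ≠ 0 := fun hh => h0 (by simp [hh])
  have hcn : p.comp (-X) = p := even_poly_comp_neg hodd
  have hsplit := (Polynomial.splits_iff_card_roots.2 hcard)
  have heq := Polynomial.Splits.eq_prod_roots hsplit
  -- no zero roots
  have hnz : ∀ x ∈ p.roots, x ≠ 0 := by
    intro x hx hx0
    exact h0 (by simpa [coeff_zero_eq_eval_zero, hx0] using (isRoot_of_mem_roots hx))
  -- split into positive and negative parts
  have hdecomp : p.roots.filter (fun x => 0 < x) + p.roots.filter (fun x => ¬ 0 < x)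
      = p.roots := Multiset.filter_add_not _ _
  have hnegfil : p.roots.filter (fun x => ¬ 0 < x)
      = (p.roots.filter fun x => 0 < x).map (fun x => -x) := by
    conv_lhs => rw [← roots_map_neg hp hcn]
    rw [Multiset.filter_map]
    congr 1
    refine Multiset.filter_congr fun x hx => ?_
    have := hnz x hx
    constructor
    · intro hne'
      simp only [Function.comp] at hne' ⊢
      rcases lt_trichotomy x 0 with h1 | h1 | h1
      · exact absurd (by simpa using h1.trans_le (le_refl 0)) (by simp [Function.comp]; linarith)
      · exact absurd h1 this
      · exact h1
    · intro hx0
      simp only [Function.comp]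
      linarith
  have hprodall : p.roots.prod = ((p.roots.filter fun x => 0 < x).prod) ^ 2 := by
    conv_lhs => rw [← hdecomp]
    rw [Multiset.prod_add, hnegfil, Multiset.prod_map_neg, hpos, hne.neg_one_pow]
    ring
  -- evaluate at 0
  have heval : p.coeff 0 = p.leadingCoeff * p.roots.prod := by
    conv_lhs => rw [coeff_zero_eq_eval_zero, heq]
    rw [eval_mul, eval_C, eval_multiset_prod]
    congr 1
    rw [Multiset.map_map]
    have : p.roots.map ((fun q : ℝ[X] => eval 0 q) ∘ fun a => X - C a)
        = p.roots.map (fun x => -x) := by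
      refine Multiset.map_congr rfl fun x _ => ?_
      simp [Function.comp]
    rw [this, roots_map_neg hp hcn]
  rw [heval, hprodall]

/-- **Even-degree case of the key lemma for Arnold's theorem on `𝕊¹` and `ℍ¹`**: let `P` be a
real polynomial of degree `2d` (`d` even, `d ≥ 2`) with only even-degree monomials, nonzero
constant term, all roots real, and exactly `d` positive roots; if `Q = P - ε X^d` also has all
roots real with exactly `d` positive ones, then the product of the positive roots of `P`
equals the product of the positive roots of `Q`. -/
theorem prod_pos_roots_eq_even_case (d : ℕ) (hd : 2 ≤ d) (hdeven : Even d) (P : ℝ[X])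
    (hdeg : P.natDegree = 2 * d) (hodd : ∀ k, Odd k → P.coeff k = 0)
    (h0 : P.coeff 0 ≠ 0) (hroots : Multiset.card P.roots = 2 * d)
    (hpos : Multiset.card (P.roots.filter fun x => 0 < x) = d)
    (ε : ℝ)
    (hrootsQ : Multiset.card (P - ε • X ^ d).roots = 2 * d)
    (hposQ : Multiset.card ((P - ε • X ^ d).roots.filter fun x => 0 < x) = d) :
    (P.roots.filter fun x => 0 < x).prod =
      ((P - ε • X ^ d).roots.filter fun x => 0 < x).prod := by
  set Q : ℝ[X] := P - ε • X ^ d with hQdef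
  have hQne : Q ≠ 0 := by
    intro hh
    rw [hh] at hrootsQ
    simp at hrootsQ
    omega
  -- coefficients of Q
  have hcoeffQ : ∀ k, Q.coeff k = P.coeff k - (if k = d then ε else 0) := by
    intro k
    simp [hQdef, coeff_smul, coeff_X_pow, smul_eq_mul, mul_ite]
  have hQ0 : Q.coeff 0 = P.coeff 0 := by
    rw [hcoeffQ]; have : (0:ℕ) ≠ d := by omega
    simp [this]
  have hQodd : ∀ k, Odd k → Q.coeff k = 0 := by
    intro k hk
    have hkd : k ≠ d := fun hh => (Nat.not_even_iff_odd.2 hk) (hh ▸ hdeven)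
    rw [hcoeffQ, hodd k hk]
    simp [hkd]
  -- natDegree of Q
  have hQdeg : Q.natDegree = 2 * d := by
    have h1 : Q.natDegree ≤ 2 * d := by
      refine le_trans (natDegree_sub_le _ _) ?_
      simp only [max_le_iff]
      constructor
      · exact hdeg.le
      · exact le_trans (natDegree_smul_le _ _) (by simp; omega)
    have h2 : 2 * d ≤ Q.natDegree := hrootsQ ▸ Q.card_roots'
    omega
  have hQlead : Q.leadingCoeff = P.leadingCoeff := by
    rw [leadingCoeff, leadingCoeff, hQdeg, hdeg, hcoeffQ]
    have : 2 * d ≠ d := by omega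
    simp [this]
  have hPne : P ≠ 0 := fun hh => h0 (by simp [hh])
  have hlcne : P.leadingCoeff ≠ 0 := leadingCoeff_ne_zero.2 hPne
  have hkeyP := key_sq hdeven hodd h0 (by rw [hdeg]; exact hroots) hpos
  have hkeyQ := key_sq hdeven hQodd (hQ0 ▸ h0) (by rw [hQdeg]; exact hrootsQ) hposQ
  rw [hQ0, hQlead, hkeyP] at hkeyQ
  have hsq : ((P.roots.filter fun x => 0 < x).prod) ^ 2
      = ((Q.roots.filter fun x => 0 < x).prod) ^ 2 :=
    mul_left_cancel₀ hlcne hkeyQ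
  have hA : 0 < (P.roots.filter fun x => 0 < x).prod :=
    Multiset.prod_pos fun a ha => (Multiset.of_mem_filter ha)
  have hB : 0 < (Q.roots.filter fun x => 0 < x).prod :=
    Multiset.prod_pos fun a ha => (Multiset.of_mem_filter ha)
  nlinarith [hsq, hA, hB]
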